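/- Let F ⊆ ℝ^n and G ⊆ ℝ^m be sets and h : ℝ^n → ℝ^m a map. Suppose that for every continuous function ℓ : ℝ^m → ℝ, the set of minimizers of ℓ over G equals the image under h of the set of minimizers of ℓ∘h over F, i.e. {y ∈ G : ∀y' ∈ G, ℓ(y) ≤ ℓ(y')} = h({x ∈ F : ∀x' ∈ F, ℓ(h(x)) ≤ ℓ(h(x'))}). Then G = h(F). -/
import Mathlib

/-- Necessity direction of Lemma 1 (optimality preserving aggregation):
if for every continuous cost `ℓ` the set of minimizers of `ℓ` over `G` equals the
image under `h` of the set of minimizers of `ℓ ∘ h` over `F`, then `G = h '' F`. -/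
theorem optimality_preserving_aggregation_necessity
    (n m : ℕ) (F : Set (Fin n → ℝ)) (G : Set (Fin m → ℝ))
    (h : (Fin n → ℝ) → (Fin m → ℝ))
    (hyp : ∀ ℓ : (Fin m → ℝ) → ℝ, Continuous ℓ →
      {y ∈ G | ∀ y' ∈ G, ℓ y ≤ ℓ y'} =
        h '' {x ∈ F | ∀ x' ∈ F, ℓ (h x) ≤ ℓ (h x')}) :
    G = h '' F := by
  ext y
  constructor
  · intro hy
    have hc : Continuous (fun z : Fin m → ℝ => ‖z - y‖) :=
      (continuous_id.sub continuous_const).norm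
    have := hyp _ hc
    have hmem : y ∈ {z ∈ G | ∀ y' ∈ G, ‖z - y‖ ≤ ‖y' - y‖} := by
      refine ⟨hy, fun y' _ => ?_⟩
      simp
    rw [this] at hmem
    obtain ⟨x, hx, hxy⟩ := hmem
    exact ⟨x, hx.1, hxy⟩
  · rintro ⟨x, hxF, rfl⟩
    have hc : Continuous (fun z : Fin m → ℝ => ‖z - h x‖) :=
      (continuous_id.sub continuous_const).norm
    have := hyp _ hc
    have hmem : h x ∈ h '' {x' ∈ F | ∀ x'' ∈ F, ‖h x' - h x‖ ≤ ‖h x'' - h x‖} := by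
      refine ⟨x, ⟨hxF, fun x'' _ => ?_⟩, rfl⟩
      simp
    rw [← this] at hmem
    exact hmem.1
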